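/- Let S = ⟨a₁, ..., aₜ⟩ be a numerical semigroup with defining toric ideal I ⊂ k[x₁,...,xₜ] (kernel of xᵢ ↦ t^{aᵢ}). If J ⊆ I is a binomial ideal such that dim_k k[x₁,...,xₜ]/(J + (x₁)) = a₁, then J = I. -/

import Mathlib

open MvPolynomial

namespace GastingerAux

variable {K : Type*} [Field K] {t : ℕ}

noncomputable def phi (a : Fin t → ℕ) : MvPolynomial (Fin t) K →ₐ[K] Polynomial K :=
  aeval fun i => Polynomial.X ^ a i

theorem phi_monomial (a : Fin t → ℕ) (m : Fin t →₀ ℕ) (c : K) :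
    phi a (monomial m c) = Polynomial.monomial (Finsupp.weight a m) c := by
  rw [phi, aeval_monomial, Polynomial.algebraMap_eq]
  have : (m.prod fun i k => (Polynomial.X (R := K) ^ a i) ^ k)
      = Polynomial.X ^ (Finsupp.weight a m : ℕ) := by
    rw [Finsupp.prod]
    have : ∀ i ∈ m.support, (Polynomial.X (R := K) ^ a i) ^ m i
        = Polynomial.X ^ (m i * a i) := by
      intro i _; rw [← pow_mul, mul_comm]
    rw [Finset.prod_congr rfl this, Finset.prod_pow_eq_pow_sum]
    rw [Finsupp.weight_apply, Finsupp.sum]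
    simp only [smul_eq_mul]
  rw [this, Polynomial.C_mul_X_pow_eq_monomial]

theorem coeff_phi (a : Fin t → ℕ) (f : MvPolynomial (Fin t) K) (n : ℕ) :
    (phi a f).coeff n
      = ∑ m ∈ f.support, if Finsupp.weight a m = n then f.coeff m else 0 := by
  conv_lhs => rw [f.as_sum, map_sum, Polynomial.finset_sum_coeff]
  refine Finset.sum_congr rfl fun m _ => ?_
  rw [phi_monomial, Polynomial.coeff_monomial]

theorem binomial_mem (a : Fin t → ℕ) {m₁ m₂ : Fin t →₀ ℕ}
    (h : Finsupp.weight a m₁ = Finsupp.weight a m₂) :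
    (monomial m₁ (1:K) - monomial m₂ 1) ∈ RingHom.ker (phi a).toRingHom := by
  rw [RingHom.mem_ker]
  show phi a _ = 0
  rw [map_sub, phi_monomial, phi_monomial, h, sub_self]


theorem comp_mul_homog (a : Fin t → ℕ) {g : MvPolynomial (Fin t) K} {e : ℕ}
    (hg : IsWeightedHomogeneous a g e) (r : MvPolynomial (Fin t) K) (d' : ℕ) :
    weightedHomogeneousComponent a (e + d') (r * g)
      = weightedHomogeneousComponent a d' r * g := by
  classical
  induction r using MvPolynomial.induction_on' with
  | monomial m c =>
    have hm : IsWeightedHomogeneous a (monomial m c) (Finsupp.weight a m) :=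
      isWeightedHomogeneous_monomial _ _ _ rfl
    have hmul : IsWeightedHomogeneous a (monomial m c * g) (Finsupp.weight a m + e) :=
      hm.mul hg
    by_cases hw : Finsupp.weight a m = d'
    · rw [hw] at hm
      rw [hm.weightedHomogeneousComponent_same]
      rw [hw, add_comm d' e] at hmul
      exact hmul.weightedHomogeneousComponent_same
    · rw [IsWeightedHomogeneous.weightedHomogeneousComponent_ne d' hm fun hh => hw hh.symm,
        IsWeightedHomogeneous.weightedHomogeneousComponent_ne (e + d') hmul
          (fun hh => hw (by omega)), zero_mul]
  | add p q hp hq =>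
    rw [add_mul, map_add, map_add, hp, hq, add_mul]


theorem comp_mul_homog_lt (a : Fin t → ℕ) {g : MvPolynomial (Fin t) K} {e : ℕ}
    (hg : IsWeightedHomogeneous a g e) (r : MvPolynomial (Fin t) K) {d : ℕ} (hd : ¬ e ≤ d) :
    weightedHomogeneousComponent a d (r * g) = 0 := by
  classical
  induction r using MvPolynomial.induction_on' with
  | monomial m c =>
    have hmul : IsWeightedHomogeneous a (monomial m c * g) (Finsupp.weight a m + e) :=
      (isWeightedHomogeneous_monomial _ _ _ rfl).mul hg
    exact IsWeightedHomogeneous.weightedHomogeneousComponent_ne d hmul (fun hh => hd (by omega))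
  | add p q hp hq => rw [add_mul, map_add, hp, hq, add_zero]

theorem ker_homog (a : Fin t → ℕ) {f : MvPolynomial (Fin t) K}
    (hf : f ∈ RingHom.ker (phi a).toRingHom) (d : ℕ) :
    weightedHomogeneousComponent a d f ∈ RingHom.ker (phi a).toRingHom := by
  classical
  rw [RingHom.mem_ker] at hf ⊢
  have hf' : ∀ n, (phi a f).coeff n = 0 := by
    intro n
    have hh : (phi a) f = 0 := hf
    rw [hh]; simp
  show phi a _ = 0
  ext e
  rw [coeff_phi, Polynomial.coeff_zero]
  by_cases hed : e = d
  · subst hed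
    have hsub : (weightedHomogeneousComponent a e f).support ⊆ f.support := by
      intro m hm
      rw [mem_support_iff, coeff_weightedHomogeneousComponent] at hm
      rw [mem_support_iff]
      intro h0; apply hm; split_ifs <;> simp [h0]
    have hze := hf' e
    rw [coeff_phi] at hze
    calc (∑ m ∈ (weightedHomogeneousComponent a e f).support,
            if Finsupp.weight a m = e then coeff m (weightedHomogeneousComponent a e f) else 0)
        = ∑ m ∈ (weightedHomogeneousComponent a e f).support,
            if Finsupp.weight a m = e then coeff m f else 0 := by
          refine Finset.sum_congr rfl fun m _ => ?_
          rw [coeff_weightedHomogeneousComponent]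
          split_ifs with h <;> rfl
      _ = ∑ m ∈ f.support, if Finsupp.weight a m = e then coeff m f else 0 := by
          refine Finset.sum_subset hsub fun m hmf hmc => ?_
          rw [mem_support_iff, not_not, coeff_weightedHomogeneousComponent] at hmc
          split_ifs with h
          · rw [← hmc, if_pos h]
          · rfl
      _ = 0 := hze
  · apply Finset.sum_eq_zero
    intro m hm
    split_ifs with h
    · rw [coeff_weightedHomogeneousComponent, if_neg fun hh => hed (h.symm.trans hh)]
    · rfl


def InS (a : Fin t → ℕ) (n : ℕ) : Prop := ∃ m : Fin t →₀ ℕ, Finsupp.weight a m = n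

def Apery (a : Fin t → ℕ) (i0 : Fin t) (n : ℕ) : Prop :=
  InS a n ∧ ¬ ∃ m : Fin t →₀ ℕ, a i0 + Finsupp.weight a m = n

theorem weight_single (a : Fin t → ℕ) (i0 : Fin t) (k : ℕ) :
    Finsupp.weight a (Finsupp.single i0 k) = k * a i0 := by
  rw [Finsupp.weight_apply, Finsupp.sum_single_index] <;> simp

theorem InS_add_mul {a : Fin t → ℕ} {i0 : Fin t} {n : ℕ} (h : InS a n) (k : ℕ) :
    InS a (n + k * a i0) := by
  obtain ⟨m, rfl⟩ := h
  exact ⟨m + Finsupp.single i0 k, by rw [map_add, weight_single]⟩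

theorem apery_inj_aux {a : Fin t → ℕ} {i0 : Fin t} (hpos : 0 < a i0) {n₁ n₂ : ℕ}
    (h1 : InS a n₁) (h2 : Apery a i0 n₂) (hle : n₁ ≤ n₂)
    (hres : (n₁ : ZMod (a i0)) = (n₂ : ZMod (a i0))) : n₁ = n₂ := by
  have hdvd : a i0 ∣ n₂ - n₁ :=
    (Nat.modEq_iff_dvd' hle).mp ((ZMod.natCast_eq_natCast_iff _ _ _).mp hres)
  obtain ⟨k, hk⟩ := hdvd
  rcases k with _ | k'
  · omega
  · exfalso
    apply h2.2
    obtain ⟨m, hm⟩ := InS_add_mul h1 k' (i0 := i0)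
    have hn2 : n₂ = n₁ + a i0 * (k' + 1) := by omega
    exact ⟨m, by rw [hm, hn2]; ring⟩

theorem apery_inj {a : Fin t → ℕ} {i0 : Fin t} (hpos : 0 < a i0) {n₁ n₂ : ℕ}
    (h1 : Apery a i0 n₁) (h2 : Apery a i0 n₂)
    (hres : (n₁ : ZMod (a i0)) = (n₂ : ZMod (a i0))) : n₁ = n₂ := by
  rcases le_total n₁ n₂ with h | h
  · exact apery_inj_aux hpos h1.1 h2 h hres
  · exact (apery_inj_aux hpos h2.1 h1 h hres.symm).symm

theorem exists_res_one {a : Fin t → ℕ} (i0 : Fin t) (hai : 0 < a i0)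
    (hgcd : Finset.univ.gcd a = 1) :
    ∃ m : Fin t →₀ ℕ, ((Finsupp.weight a m : ℕ) : ZMod (a i0)) = 1 := by
  haveI : NeZero (a i0) := ⟨hai.ne'⟩
  set Qp : ZMod (a i0) → Prop := fun r => ∃ m : Fin t →₀ ℕ,
    ((Finsupp.weight a m : ℕ) : ZMod (a i0)) = r with hQp
  have qadd : ∀ x y, Qp x → Qp y → Qp (x + y) := by
    rintro x y ⟨m1, rfl⟩ ⟨m2, rfl⟩
    exact ⟨m1 + m2, by rw [map_add]; push_cast; ring⟩
  have qmul : ∀ x, Qp x → ∀ z : ZMod (a i0), Qp (z * x) := by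
    rintro x ⟨m, rfl⟩ z
    refine ⟨z.val • m, ?_⟩
    rw [map_nsmul]
    rw [smul_eq_mul]
    push_cast
    rw [ZMod.natCast_rightInverse z]
  have qgcd : ∀ x y : ℕ, Qp x → Qp y → Qp ((Nat.gcd x y : ℕ) : ZMod (a i0)) := by
    intro x y hx hy
    have hb := Nat.gcd_eq_gcd_ab x y
    have : ((Nat.gcd x y : ℕ) : ZMod (a i0))
        = ((Nat.gcdA x y : ℤ) : ZMod (a i0)) * (x : ZMod (a i0))
          + ((Nat.gcdB x y : ℤ) : ZMod (a i0)) * (y : ZMod (a i0)) := by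
      have := congrArg (fun z : ℤ => (z : ZMod (a i0))) hb
      push_cast at this
      rw [this]; ring
    rw [this]
    exact qadd _ _ (qmul _ hx _) (qmul _ hy _)
  have qfin : ∀ s : Finset (Fin t), Qp ((s.gcd a : ℕ) : ZMod (a i0)) := by
    intro s
    induction s using Finset.induction_on with
    | empty => exact ⟨0, by simp⟩
    | insert _ _ hni ih =>
      rw [Finset.gcd_insert]
      exact qgcd _ _ ⟨Finsupp.single _ 1, by rw [weight_single]; push_cast; ring⟩ ih
  have := qfin Finset.univ
  rw [hgcd] at this
  exact_mod_cast this

theorem apery_surj {a : Fin t → ℕ} (i0 : Fin t) (hai : 0 < a i0)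
    (hgcd : Finset.univ.gcd a = 1) (r : ZMod (a i0)) :
    ∃ n : ℕ, Apery a i0 n ∧ ((n : ℕ) : ZMod (a i0)) = r := by
  classical
  haveI : NeZero (a i0) := ⟨hai.ne'⟩
  obtain ⟨m1, hm1⟩ := exists_res_one i0 hai hgcd
  have H : ∃ n : ℕ, InS a n ∧ ((n : ℕ) : ZMod (a i0)) = r := by
    refine ⟨Finsupp.weight a (r.val • m1), ⟨_, rfl⟩, ?_⟩
    rw [map_nsmul, smul_eq_mul]
    push_cast
    rw [hm1, mul_one, ZMod.natCast_rightInverse r]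
  let n₀ := Nat.find H
  have hspec := Nat.find_spec H
  refine ⟨n₀, ⟨hspec.1, ?_⟩, hspec.2⟩
  rintro ⟨m', hm'⟩
  have hlt : Finsupp.weight a m' < n₀ := by omega
  apply Nat.find_min H hlt
  refine ⟨⟨m', rfl⟩, ?_⟩
  have : ((n₀ : ℕ) : ZMod (a i0)) = r := hspec.2
  rw [← this, ← hm']
  push_cast
  rw [ZMod.natCast_self]
  ring

section Theta

open Classical in
noncomputable def vA (a : Fin t → ℕ) (i0 : Fin t) (n : ℕ) : ZMod (a i0) → K :=
  if Apery a i0 n then Pi.single ((n : ZMod (a i0))) (1 : K) else 0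

noncomputable def theta (a : Fin t → ℕ) (i0 : Fin t) (f : MvPolynomial (Fin t) K) :
    ZMod (a i0) → K :=
  (phi a f).sum fun d c => c • vA a i0 d

theorem theta_monomial (a : Fin t → ℕ) (i0 : Fin t) (m : Fin t →₀ ℕ) (c : K) :
    theta a i0 (monomial m c) = c • vA (K := K) a i0 (Finsupp.weight a m) := by
  rw [theta, phi_monomial]
  exact Polynomial.sum_monomial_index c _ (zero_smul _ _)

theorem theta_add (a : Fin t → ℕ) (i0 : Fin t) (f g : MvPolynomial (Fin t) K) :
    theta a i0 (f + g) = theta a i0 f + theta a i0 g := by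
  rw [theta, theta, theta, map_add]
  exact Polynomial.sum_add_index _ _ _ (fun i => zero_smul _ _) (fun i b₁ b₂ => add_smul _ _ _)

theorem theta_zero (a : Fin t → ℕ) (i0 : Fin t) :
    theta (K := K) a i0 0 = 0 := by
  rw [theta, map_zero]
  exact Polynomial.sum_zero_index _

theorem theta_ker (a : Fin t → ℕ) (i0 : Fin t) {f : MvPolynomial (Fin t) K}
    (hf : f ∈ RingHom.ker (phi a).toRingHom) : theta a i0 f = 0 := by
  have h : phi a f = 0 := hf
  rw [theta, h]
  exact Polynomial.sum_zero_index _

theorem vA_shift (a : Fin t → ℕ) (i0 : Fin t) (m : Fin t →₀ ℕ) :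
    vA (K := K) a i0 (a i0 + Finsupp.weight a m) = 0 := by
  rw [vA, if_neg]
  intro hap
  exact hap.2 ⟨m, rfl⟩

theorem theta_X_mul (a : Fin t → ℕ) (i0 : Fin t) (h : MvPolynomial (Fin t) K) :
    theta a i0 (X i0 * h) = 0 := by
  induction h using MvPolynomial.induction_on' with
  | monomial m c =>
    have : X (R := K) i0 * monomial m c = monomial (Finsupp.single i0 1 + m) c := by
      rw [show X (R := K) i0 = monomial (Finsupp.single i0 1) 1 from (pow_one _).symm.trans
        X_pow_eq_monomial, monomial_mul, one_mul]
    rw [this, theta_monomial]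
    have hw : Finsupp.weight a (Finsupp.single i0 1 + m)
        = a i0 + Finsupp.weight a m := by
      rw [map_add, weight_single, one_mul]
    rw [hw, vA_shift, smul_zero]
  | add p q hp hq =>
    rw [mul_add, theta_add, hp, hq, add_zero]

theorem theta_sup (a : Fin t → ℕ) (i0 : Fin t) {f : MvPolynomial (Fin t) K}
    (hf : f ∈ RingHom.ker (phi a).toRingHom ⊔ Ideal.span {X i0}) : theta a i0 f = 0 := by
  rw [Submodule.mem_sup] at hf
  obtain ⟨g, hg, z, hz, rfl⟩ := hf
  obtain ⟨h, rfl⟩ := Ideal.mem_span_singleton'.mp hz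
  rw [theta_add, theta_ker a i0 hg, mul_comm, theta_X_mul, add_zero]

theorem theta_sum (a : Fin t → ℕ) (i0 : Fin t) {ι : Type*} (s : Finset ι)
    (F : ι → MvPolynomial (Fin t) K) :
    theta a i0 (∑ x ∈ s, F x) = ∑ x ∈ s, theta a i0 (F x) := by
  induction s using Finset.cons_induction with
  | empty => simpa using theta_zero a i0
  | cons x s hx ih => rw [Finset.sum_cons, Finset.sum_cons, theta_add, ih]

section Mu

variable (a : Fin t → ℕ) (i0 : Fin t) [NeZero (a i0)]
variable (μ : ZMod (a i0) → (Fin t →₀ ℕ))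

theorem theta_psi
    (hμ1 : ∀ r, Apery a i0 (Finsupp.weight a (μ r)))
    (hμ2 : ∀ r, ((Finsupp.weight a (μ r) : ℕ) : ZMod (a i0)) = r)
    (g : ZMod (a i0) → K) :
    theta a i0 (∑ r : ZMod (a i0), monomial (μ r) (g r)) = g := by
  rw [theta_sum]
  have h1 : ∀ r : ZMod (a i0), theta (K := K) a i0 (monomial (μ r) (g r))
      = Pi.single r (g r) := by
    intro r
    rw [theta_monomial, vA, if_pos (hμ1 r), hμ2 r]
    ext r'
    rcases eq_or_ne r' r with rfl | hne
    · simp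
    · simp [Pi.single_eq_of_ne hne]
  rw [Finset.sum_congr rfl fun r _ => h1 r]
  exact Finset.univ_sum_single g

theorem main_decomp (hai : 0 < a i0)
    (hμ1 : ∀ r, Apery a i0 (Finsupp.weight a (μ r)))
    (hμ2 : ∀ r, ((Finsupp.weight a (μ r) : ℕ) : ZMod (a i0)) = r)
    (f : MvPolynomial (Fin t) K) :
    f - (∑ r : ZMod (a i0), monomial (μ r) (theta a i0 f r))
      ∈ RingHom.ker (phi (K := K) a).toRingHom ⊔ Ideal.span {X i0} := by
  classical
  induction f using MvPolynomial.induction_on' with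
  | monomial m c =>
    rw [theta_monomial]
    by_cases hap : Apery a i0 (Finsupp.weight a m)
    · have hsum : (∑ r : ZMod (a i0), monomial (μ r)
          ((c • vA (K := K) a i0 (Finsupp.weight a m)) r))
          = monomial (μ ((Finsupp.weight a m : ℕ) : ZMod (a i0))) c := by
        rw [vA, if_pos hap, Finset.sum_eq_single ((Finsupp.weight a m : ℕ) : ZMod (a i0))]
        · rw [Pi.smul_apply, Pi.single_eq_same, smul_eq_mul, mul_one]
        · intro r _ hr
          rw [Pi.smul_apply, Pi.single_eq_of_ne hr, smul_zero, map_zero]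
        · intro h; exact absurd (Finset.mem_univ _) h
      rw [hsum]
      have hw : Finsupp.weight a m
          = Finsupp.weight a (μ ((Finsupp.weight a m : ℕ) : ZMod (a i0))) :=
        (apery_inj hai (hμ1 _) hap (by rw [hμ2])).symm
      have heq : monomial m c - monomial (μ ((Finsupp.weight a m : ℕ) : ZMod (a i0))) c
          = C c * (monomial m (1:K) - monomial (μ ((Finsupp.weight a m : ℕ) : ZMod (a i0))) 1) := by
        rw [mul_sub, C_mul_monomial, C_mul_monomial, mul_one]
      rw [heq]
      exact Ideal.mem_sup_left (Ideal.mul_mem_left _ _ (binomial_mem a hw))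
    · have hsum : (∑ r : ZMod (a i0), monomial (μ r)
          ((c • vA (K := K) a i0 (Finsupp.weight a m)) r)) = 0 := by
        rw [vA, if_neg hap]
        apply Finset.sum_eq_zero; intro r _; simp
      rw [hsum, sub_zero]
      rw [Apery, not_and_or] at hap
      rcases hap with h | h
      · exact absurd ⟨m, rfl⟩ h
      · rw [not_not] at h
        obtain ⟨m'', hm''⟩ := h
        have hw : Finsupp.weight a m
            = Finsupp.weight a (Finsupp.single i0 1 + m'') := by
          rw [map_add, weight_single, one_mul, hm'']
        have hXdvd : monomial (Finsupp.single i0 1 + m'') (c : K)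
            ∈ Ideal.span {X (R := K) i0} := by
          rw [Ideal.mem_span_singleton']
          refine ⟨monomial m'' c, ?_⟩
          rw [show X (R := K) i0 = monomial (Finsupp.single i0 1) 1 from (pow_one _).symm.trans
            X_pow_eq_monomial, monomial_mul, mul_one, add_comm]
        have : monomial m c = C c * (monomial m (1:K)
            - monomial (Finsupp.single i0 1 + m'') 1)
            + monomial (Finsupp.single i0 1 + m'') c := by
          rw [mul_sub, C_mul_monomial, C_mul_monomial, mul_one]
          ring
        rw [this]
        exact Ideal.add_mem _
          (Ideal.mem_sup_left (Ideal.mul_mem_left _ _ (binomial_mem a hw)))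
          (Ideal.mem_sup_right hXdvd)
  | add p q hp hq =>
    rw [theta_add]
    have : (∑ r : ZMod (a i0), monomial (μ r) ((theta a i0 p + theta a i0 q) r))
        = (∑ r : ZMod (a i0), monomial (μ r) (theta a i0 p r))
          + ∑ r : ZMod (a i0), monomial (μ r) (theta a i0 q r) := by
      rw [← Finset.sum_add_distrib]
      exact Finset.sum_congr rfl fun r _ => by rw [Pi.add_apply, map_add]
    rw [this, show p + q - ((∑ r : ZMod (a i0), monomial (μ r) (theta a i0 p r))
          + ∑ r : ZMod (a i0), monomial (μ r) (theta a i0 q r))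
        = (p - ∑ r : ZMod (a i0), monomial (μ r) (theta a i0 p r))
          + (q - ∑ r : ZMod (a i0), monomial (μ r) (theta a i0 q r)) from by ring]
    exact Ideal.add_mem _ hp hq

end Mu

end Theta

end GastingerAux


set_option maxHeartbeats 2000000 in
open GastingerAux in
/-- **Gastinger's criterion.** Let `S = ⟨a 0, …, a (t-1)⟩` be a numerical semigroup
(the `a i` are positive with gcd 1) with defining toric ideal `I`, the kernel of
`X i ↦ T ^ (a i)`.  If `J ⊆ I` is a binomial ideal such that
`dim_K K[x]/(J + (x 0)) = a 0`, then `J = I`. -/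
theorem gastinger_criterion (K : Type*) [Field K] (t : ℕ) (ht : 0 < t)
    (a : Fin t → ℕ) (hpos : ∀ i, 0 < a i) (hgcd : Finset.univ.gcd a = 1)
    (I : Ideal (MvPolynomial (Fin t) K))
    (hI : I = RingHom.ker (aeval fun i => (Polynomial.X : Polynomial K) ^ (a i)).toRingHom)
    (J : Ideal (MvPolynomial (Fin t) K)) (hJI : J ≤ I)
    (G : Set (MvPolynomial (Fin t) K))
    (hbin : ∀ g ∈ G, ∃ m₁ m₂ : Fin t →₀ ℕ, g = monomial m₁ 1 - monomial m₂ 1)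
    (hJG : J = Ideal.span G)
    (hdim : Module.finrank K
      (MvPolynomial (Fin t) K ⧸ (J ⊔ Ideal.span {X (⟨0, ht⟩ : Fin t)})) = a ⟨0, ht⟩) :
    J = I := by
  classical
  set i0 : Fin t := ⟨0, ht⟩ with hi0
  have hI' : I = RingHom.ker (phi (K := K) a).toRingHom := hI
  haveI : NeZero (a i0) := ⟨(hpos i0).ne'⟩
  -- Choice of Apéry monomials
  have hμex : ∀ r : ZMod (a i0), ∃ m : Fin t →₀ ℕ,
      Apery a i0 (Finsupp.weight a m) ∧ ((Finsupp.weight a m : ℕ) : ZMod (a i0)) = r := by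
    intro r
    obtain ⟨n, hap, hres⟩ := apery_surj i0 (hpos i0) hgcd r
    obtain ⟨m, hm⟩ := hap.1
    rw [← hm] at hap hres
    exact ⟨m, hap, hres⟩
  choose μ hμ1 hμ2 using hμex
  set Ix : Ideal (MvPolynomial (Fin t) K) :=
    RingHom.ker (phi (K := K) a).toRingHom ⊔ Ideal.span {X i0} with hIxdef
  set Jx : Ideal (MvPolynomial (Fin t) K) := J ⊔ Ideal.span {X i0} with hJxdef
  -- Basis of the Apéry quotient
  set QI := MvPolynomial (Fin t) K ⧸ Ix with hQI
  set mkI : MvPolynomial (Fin t) K →ₐ[K] QI := Ideal.Quotient.mkₐ K Ix with hmkI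
  set b : ZMod (a i0) → QI := fun r => mkI (monomial (μ r) 1) with hb
  have hmono : ∀ (m : Fin t →₀ ℕ) (c : K), monomial m c = c • monomial m (1:K) := by
    intro m c; rw [smul_monomial, smul_eq_mul, mul_one]
  have hbspan : ⊤ ≤ Submodule.span K (Set.range b) := by
    rintro x -
    obtain ⟨f, rfl⟩ := Ideal.Quotient.mkₐ_surjective K Ix x
    have hdec := main_decomp a i0 μ (hpos i0) hμ1 hμ2 f
    have h0 : mkI (f - ∑ r : ZMod (a i0), monomial (μ r) (theta a i0 f r)) = 0 := by
      rw [hmkI, Ideal.Quotient.mkₐ_eq_mk, Ideal.Quotient.eq_zero_iff_mem]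
      exact hdec
    rw [map_sub, sub_eq_zero] at h0
    rw [show (Ideal.Quotient.mkₐ K Ix) f = mkI f from rfl, h0, map_sum]
    apply Submodule.sum_mem
    intro r _
    rw [hmono (μ r) (theta a i0 f r), map_smul]
    exact Submodule.smul_mem _ _ (Submodule.subset_span ⟨r, rfl⟩)
  have hbli : LinearIndependent K b := by
    rw [Fintype.linearIndependent_iff]
    intro g hg
    have h1 : mkI (∑ r : ZMod (a i0), monomial (μ r) (g r)) = 0 := by
      rw [map_sum]
      rw [Finset.sum_congr rfl (fun r _ => by rw [hmono (μ r) (g r), map_smul])]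
      exact hg
    have h2 : (∑ r : ZMod (a i0), monomial (μ r) (g r)) ∈ Ix := by
      rw [hmkI, Ideal.Quotient.mkₐ_eq_mk, Ideal.Quotient.eq_zero_iff_mem] at h1
      exact h1
    have h3 := theta_sup a i0 h2
    rw [theta_psi a i0 μ hμ1 hμ2 g] at h3
    exact fun i => congrFun h3 i
  set B : Module.Basis (ZMod (a i0)) K QI := Module.Basis.mk hbli hbspan with hB
  haveI : FiniteDimensional K QI := Module.Finite.of_basis B
  have hrankQI : Module.finrank K QI = a i0 := by
    rw [Module.finrank_eq_card_basis B, ZMod.card]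
  -- Comparison of the two quotients
  haveI : FiniteDimensional K (MvPolynomial (Fin t) K ⧸ Jx) :=
    FiniteDimensional.of_finrank_pos (hdim ▸ hpos i0)
  have hJxIx : Jx ≤ Ix := sup_le_sup_right (hI' ▸ hJI) _
  set π : (MvPolynomial (Fin t) K ⧸ Jx) →ₐ[K] QI :=
    Ideal.quotientMapₐ Ix (AlgHom.id K _) (by simpa using hJxIx) with hπ
  have hπmk : ∀ f, π (Ideal.Quotient.mk Jx f) = Ideal.Quotient.mk Ix f := by
    intro f
    rfl
  have hπs : Function.Surjective π := by
    intro y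
    obtain ⟨f, rfl⟩ := Ideal.Quotient.mkₐ_surjective K Ix y
    exact ⟨Ideal.Quotient.mk Jx f, by rw [hπmk, Ideal.Quotient.mkₐ_eq_mk]⟩
  have hker0 : LinearMap.ker π.toLinearMap = ⊥ := by
    have h1 := LinearMap.finrank_range_add_finrank_ker π.toLinearMap
    have h2 : LinearMap.range π.toLinearMap = ⊤ := LinearMap.range_eq_top.mpr hπs
    rw [h2, finrank_top] at h1
    rw [hrankQI, hdim] at h1
    have h3 : Module.finrank K (LinearMap.ker π.toLinearMap) = 0 := by omega
    exact Submodule.finrank_eq_zero.mp h3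
  have hIxJx : Ix ≤ Jx := by
    intro f hf
    have h0 : π (Ideal.Quotient.mk Jx f) = 0 := by
      rw [hπmk, Ideal.Quotient.eq_zero_iff_mem]
      exact hf
    have h1 : Ideal.Quotient.mk Jx f ∈ LinearMap.ker π.toLinearMap := h0
    rw [hker0, Submodule.mem_bot] at h1
    exact Ideal.Quotient.eq_zero_iff_mem.mp h1
  -- homogeneity of the generators
  have hGhom : ∀ g ∈ G, ∃ e, IsWeightedHomogeneous a g e := by
    intro g hg
    obtain ⟨m₁, m₂, rfl⟩ := hbin g hg
    by_cases hmm : m₁ = m₂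
    · subst hmm
      exact ⟨0, by rw [sub_self]; intro d hd; exact absurd (coeff_zero d) hd⟩
    · have hmem : (monomial m₁ (1:K) - monomial m₂ 1) ∈ I :=
        hJI (hJG ▸ Ideal.subset_span hg)
      rw [hI'] at hmem
      have hphi : phi a (monomial m₁ (1:K) - monomial m₂ 1) = 0 := hmem
      rw [map_sub, phi_monomial, phi_monomial, sub_eq_zero] at hphi
      have hw : Finsupp.weight a m₁ = Finsupp.weight a m₂ := by
        rcases Polynomial.monomial_eq_monomial_iff.mp hphi with ⟨hw, -⟩ | ⟨h1, -⟩
        · exact hw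
        · exact absurd h1 one_ne_zero
      refine ⟨Finsupp.weight a m₁, ?_⟩
      have h1 : (monomial m₁ (1:K)) ∈ weightedHomogeneousSubmodule K a (Finsupp.weight a m₁) :=
        isWeightedHomogeneous_monomial _ _ _ rfl
      have h2 : (monomial m₂ (1:K)) ∈ weightedHomogeneousSubmodule K a (Finsupp.weight a m₁) :=
        isWeightedHomogeneous_monomial _ _ _ hw.symm
      exact sub_mem h1 h2
  -- J is a homogeneous ideal
  have hJhom : ∀ p ∈ J, ∀ d, weightedHomogeneousComponent a d p ∈ J := by
    intro p hp d
    rw [hJG] at hp ⊢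
    obtain ⟨c, hsupp, rfl⟩ := Submodule.mem_span_set.mp hp
    rw [map_finsuppSum]
    apply Submodule.sum_mem
    intro g hgs
    obtain ⟨e, hge⟩ := hGhom g (hsupp hgs)
    show weightedHomogeneousComponent a d (c g * g) ∈ Ideal.span G
    by_cases hle : e ≤ d
    · obtain ⟨d', rfl⟩ : ∃ d', d = e + d' := ⟨d - e, by omega⟩
      rw [comp_mul_homog a hge]
      exact Ideal.mul_mem_left _ _ (Ideal.subset_span (hsupp hgs))
    · rw [comp_mul_homog_lt a hge _ hle]
      exact zero_mem _
  -- the key induction on weighted degree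
  have hmain : ∀ d, ∀ p, IsWeightedHomogeneous a p d →
      p ∈ RingHom.ker (phi (K := K) a).toRingHom → p ∈ J := by
    intro d
    induction d using Nat.strong_induction_on with
    | _ d IH =>
      intro p hph hpI
      have hpJx : p ∈ Jx := hIxJx (Ideal.mem_sup_left hpI)
      rw [hJxdef, Submodule.mem_sup] at hpJx
      obtain ⟨g, hgJ, z, hz, hpgz⟩ := hpJx
      obtain ⟨h, hh⟩ := Ideal.mem_span_singleton'.mp hz
      have hXhom : IsWeightedHomogeneous a (X (R := K) i0) (a i0) :=
        isWeightedHomogeneous_X (R := K) a i0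
      have hcompp : weightedHomogeneousComponent a d p = p := hph.weightedHomogeneousComponent_same
      by_cases hle : a i0 ≤ d
      · obtain ⟨d', rfl⟩ : ∃ d', d = a i0 + d' := ⟨d - a i0, by omega⟩
        have hsplit : p = weightedHomogeneousComponent a (a i0 + d') g
            + weightedHomogeneousComponent a d' h * X i0 := by
          conv_lhs => rw [← hcompp, ← hpgz]
          rw [map_add, ← hh, comp_mul_homog a hXhom h d']
        have hgJd : weightedHomogeneousComponent a (a i0 + d') g ∈ J := hJhom g hgJ _
        have hhI : weightedHomogeneousComponent a d' h * X i0
            ∈ RingHom.ker (phi (K := K) a).toRingHom := by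
          have heq : weightedHomogeneousComponent a d' h * X i0
              = p - weightedHomogeneousComponent a (a i0 + d') g := by
            rw [hsplit]; ring
          rw [heq]
          exact sub_mem hpI (hI' ▸ hJI hgJd)
        have hprime : (RingHom.ker (phi (K := K) a).toRingHom).IsPrime :=
          RingHom.ker_isPrime _
        have hX : X (R := K) i0 ∉ RingHom.ker (phi (K := K) a).toRingHom := by
          intro hX
          have hphiX : phi (K := K) a (X i0) = 0 := hX
          rw [phi, aeval_X] at hphiX
          exact Polynomial.X_ne_zero (pow_eq_zero_iff (hpos i0).ne' |>.mp hphiX)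
        have hcomphI : weightedHomogeneousComponent a d' h
            ∈ RingHom.ker (phi (K := K) a).toRingHom := by
          rcases hprime.mem_or_mem hhI with hc | hx
          · exact hc
          · exact absurd hx hX
        have hcomphJ : weightedHomogeneousComponent a d' h ∈ J :=
          IH d' (by have := hpos i0; omega) _
            (weightedHomogeneousComponent_isWeightedHomogeneous d' h) hcomphI
        rw [hsplit]
        exact add_mem hgJd (Ideal.mul_mem_right _ _ hcomphJ)
      · have hp' : p = weightedHomogeneousComponent a d g := by
          conv_lhs => rw [← hcompp, ← hpgz]
          rw [map_add, ← hh, comp_mul_homog_lt a hXhom h hle, add_zero]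
        rw [hp']
        exact hJhom g hgJ d
  -- conclusion
  have hIJ : I ≤ J := by
    rw [hI']
    intro f hf
    have hdecf := sum_weightedHomogeneousComponent a f
    rw [finsum_eq_sum _ (weightedHomogeneousComponent_finsupp f)] at hdecf
    rw [← hdecf]
    apply Submodule.sum_mem
    intro d _
    exact hmain d _ (weightedHomogeneousComponent_isWeightedHomogeneous d f) (ker_homog a hf d)
  exact le_antisymm hJI hIJ
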